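/- Each equally weighted mixture Φᵢⱼ = (Ψᵢ + Ψⱼ)/2 of two distinct orthogonal Bell-state projectors on ℂ²⊗ℂ² is a separable state. -/

import Mathlib

open Matrix ComplexOrder Kronecker

/-- Squared Hilbert-Schmidt norm: ‖A‖²_HS = tr(A*A). -/
noncomputable def hsNormSq {n : Type*} [Fintype n] (A : Matrix n n ℂ) : ℝ :=
  (Aᴴ * A).trace.re

/-- A density matrix: positive semidefinite with trace 1. -/
def IsDensity {n : Type*} [Fintype n] [DecidableEq n] (ρ : Matrix n n ℂ) : Prop :=
  ρ.PosSemidef ∧ ρ.trace = 1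

/-- A separable (disentangled) state: a finite convex combination of
tensor products of density matrices. -/
def IsSepState {m n : Type*} [Fintype m] [Fintype n] [DecidableEq m] [DecidableEq n]
    (ρ : Matrix (m × n) (m × n) ℂ) : Prop :=
  ∃ (k : ℕ) (p : Fin k → ℝ) (ρ₁ : Fin k → Matrix m m ℂ) (ρ₂ : Fin k → Matrix n n ℂ),
    (∀ i, 0 ≤ p i) ∧ (∑ i, p i = 1) ∧ (∀ i, IsDensity (ρ₁ i)) ∧ (∀ i, IsDensity (ρ₂ i)) ∧
    ρ = ∑ i, (p i : ℂ) • ((ρ₁ i) ⊗ₖ (ρ₂ i))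

/-- The rank-one projector |v⟩⟨v| onto a vector v. -/
noncomputable def proj {n : Type*} [Fintype n] (v : n → ℂ) : Matrix n n ℂ :=
  Matrix.vecMulVec v (star v)

/-- The four Bell vectors ψ₁,ψ₂,ψ₃,ψ₄ on ℂ²⊗ℂ². -/
noncomputable def bell (i : Fin 4) (p : Fin 2 × Fin 2) : ℂ :=
  (((Real.sqrt 2 : ℝ) : ℂ))⁻¹ *
    (if i = 0 then (if p = (0, 0) then 1 else if p = (1, 1) then 1 else 0)
     else if i = 1 then (if p = (0, 0) then 1 else if p = (1, 1) then -1 else 0)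
     else if i = 2 then (if p = (0, 1) then 1 else if p = (1, 0) then 1 else 0)
     else (if p = (0, 1) then 1 else if p = (1, 0) then -1 else 0))

/- ### Auxiliary material -/

lemma proj_posSemidef {n : Type*} [Fintype n] [DecidableEq n] (v : n → ℂ) :
    (proj v).PosSemidef := by
  have : proj v = replicateCol (Fin 1) v * (replicateCol (Fin 1) v)ᴴ := by
    rw [conjTranspose_replicateCol, ]; exact vecMulVec_eq (Fin 1) v (star v)
  rw [this]
  exact posSemidef_self_mul_conjTranspose _

lemma proj_density {n : Type*} [Fintype n] [DecidableEq n] (v : n → ℂ)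
    (hv : ∑ i, v i * star (v i) = 1) : IsDensity (proj v) := by
  refine ⟨proj_posSemidef v, ?_⟩
  simpa [proj, Matrix.trace, Matrix.diag, vecMulVec_apply] using hv

lemma q_real : star (((Real.sqrt 2 : ℝ) : ℂ))⁻¹ = (((Real.sqrt 2 : ℝ) : ℂ))⁻¹ := by
  simp [← Complex.ofReal_inv]

lemma q_sq : (((Real.sqrt 2 : ℝ) : ℂ))⁻¹ ^ 2 = 2⁻¹ := by
  have h : ((Real.sqrt 2 : ℝ) : ℂ) ^ 2 = 2 := by
    rw [← Complex.ofReal_pow]; norm_num [Real.sq_sqrt]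
  rw [inv_pow, h]

lemma q_pow4 : (((Real.sqrt 2 : ℝ) : ℂ))⁻¹ ^ 4 = 4⁻¹ := by
  have h : (4:ℕ) = 2 * 2 := rfl
  rw [h, pow_mul, q_sq]; norm_num

lemma q_conj : (starRingEnd ℂ) (((Real.sqrt 2 : ℝ) : ℂ))⁻¹ = (((Real.sqrt 2 : ℝ) : ℂ))⁻¹ := by
  simp [← Complex.ofReal_inv]

lemma q_mul : (((Real.sqrt 2 : ℝ) : ℂ))⁻¹ * (((Real.sqrt 2 : ℝ) : ℂ))⁻¹ = 2⁻¹ := by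
  rw [← sq, q_sq]

lemma q_sq' : ((Real.sqrt 2 : ℝ) : ℂ) ^ 2 = 2 := by
  rw [← Complex.ofReal_pow]; norm_num [Real.sq_sqrt]

lemma q_pow4' : ((Real.sqrt 2 : ℝ) : ℂ) ^ 4 = 4 := by
  have h : (4:ℕ) = 2 * 2 := rfl
  rw [h, pow_mul, q_sq']; norm_num

noncomputable def e0 : Fin 2 → ℂ := ![1, 0]
noncomputable def e1 : Fin 2 → ℂ := ![0, 1]
noncomputable def xp : Fin 2 → ℂ := ![(((Real.sqrt 2 : ℝ) : ℂ))⁻¹, (((Real.sqrt 2 : ℝ) : ℂ))⁻¹]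
noncomputable def xm : Fin 2 → ℂ := ![(((Real.sqrt 2 : ℝ) : ℂ))⁻¹, -(((Real.sqrt 2 : ℝ) : ℂ))⁻¹]
noncomputable def yp : Fin 2 → ℂ :=
  ![(((Real.sqrt 2 : ℝ) : ℂ))⁻¹, (((Real.sqrt 2 : ℝ) : ℂ))⁻¹ * Complex.I]
noncomputable def ym : Fin 2 → ℂ :=
  ![(((Real.sqrt 2 : ℝ) : ℂ))⁻¹, -((((Real.sqrt 2 : ℝ) : ℂ))⁻¹ * Complex.I)]

lemma e0_density : IsDensity (proj e0) := by
  refine proj_density _ ?_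
  simp [e0, Fin.sum_univ_two]

lemma e1_density : IsDensity (proj e1) := by
  refine proj_density _ ?_
  simp [e1, Fin.sum_univ_two]

lemma xp_density : IsDensity (proj xp) := by
  refine proj_density _ ?_
  simp only [xp, Fin.sum_univ_two, Matrix.cons_val_zero, Matrix.cons_val_one, Matrix.head_cons,
    q_real]
  ring_nf
  norm_num [q_sq, q_sq']

lemma xm_density : IsDensity (proj xm) := by
  refine proj_density _ ?_
  simp only [xm, Fin.sum_univ_two, Matrix.cons_val_zero, Matrix.cons_val_one, Matrix.head_cons,
    star_neg, q_real]
  ring_nf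
  norm_num [q_sq, q_sq']

lemma yp_density : IsDensity (proj yp) := by
  refine proj_density _ ?_
  simp only [yp, Fin.sum_univ_two, Matrix.cons_val_zero, Matrix.cons_val_one, Matrix.head_cons,
    _root_.map_mul, _root_.map_neg, q_conj, Complex.star_def, Complex.conj_I]
  linear_combination (1 - Complex.I * Complex.I) * q_mul - (2:ℂ)⁻¹ * Complex.I_mul_I

lemma ym_density : IsDensity (proj ym) := by
  refine proj_density _ ?_
  simp only [ym, Fin.sum_univ_two, Matrix.cons_val_zero, Matrix.cons_val_one, Matrix.head_cons,
    star_neg, _root_.map_mul, _root_.map_neg, q_conj, Complex.star_def, Complex.conj_I]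
  linear_combination (1 - Complex.I * Complex.I) * q_mul - (2:ℂ)⁻¹ * Complex.I_mul_I

lemma isSep_two {u₁ v₁ u₂ v₂ : Fin 2 → ℂ}
    (h₁ : IsDensity (proj u₁)) (h₂ : IsDensity (proj v₁))
    (h₃ : IsDensity (proj u₂)) (h₄ : IsDensity (proj v₂)) :
    IsSepState ((2 : ℂ)⁻¹ • ((proj u₁ ⊗ₖ proj v₁) + (proj u₂ ⊗ₖ proj v₂))) := by
  refine ⟨2, ![1/2, 1/2], ![proj u₁, proj u₂], ![proj v₁, proj v₂], ?_, ?_, ?_, ?_, ?_⟩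
  · intro i; fin_cases i <;> norm_num
  · simp [Fin.sum_univ_two]; norm_num
  · intro i; fin_cases i <;> simpa
  · intro i; fin_cases i <;> simpa
  · rw [smul_add, Fin.sum_univ_two]
    norm_num


lemma id01 : proj (bell 0) + proj (bell 1) =
    (proj e0 ⊗ₖ proj e0) + (proj e1 ⊗ₖ proj e1) := by
  ext ⟨p1, p2⟩ ⟨r1, r2⟩
  fin_cases p1 <;> fin_cases p2 <;> fin_cases r1 <;> fin_cases r2 <;>
    simp (config := { decide := true }) [proj, bell, e0, e1, xp, xm, yp, ym, vecMulVec_apply,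
      kroneckerMap_apply, q_real, star_mul', Complex.conj_I, -cons_vecMulVec] <;>
    ring_nf <;> norm_num [q_sq, q_sq', q_pow4, q_pow4', Complex.I_sq]

lemma sep01 : IsSepState ((2 : ℂ)⁻¹ • (proj (bell 0) + proj (bell 1))) := by
  rw [id01]
  exact isSep_two e0_density e0_density e1_density e1_density


lemma id23 : proj (bell 2) + proj (bell 3) =
    (proj e0 ⊗ₖ proj e1) + (proj e1 ⊗ₖ proj e0) := by
  ext ⟨p1, p2⟩ ⟨r1, r2⟩
  fin_cases p1 <;> fin_cases p2 <;> fin_cases r1 <;> fin_cases r2 <;>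
    simp (config := { decide := true }) [proj, bell, e0, e1, xp, xm, yp, ym, vecMulVec_apply,
      kroneckerMap_apply, q_real, star_mul', Complex.conj_I, -cons_vecMulVec] <;>
    ring_nf <;> norm_num [q_sq, q_sq', q_pow4, q_pow4', Complex.I_sq]

lemma sep23 : IsSepState ((2 : ℂ)⁻¹ • (proj (bell 2) + proj (bell 3))) := by
  rw [id23]
  exact isSep_two e0_density e1_density e1_density e0_density


lemma id02 : proj (bell 0) + proj (bell 2) =
    (proj xp ⊗ₖ proj xp) + (proj xm ⊗ₖ proj xm) := by
  ext ⟨p1, p2⟩ ⟨r1, r2⟩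
  fin_cases p1 <;> fin_cases p2 <;> fin_cases r1 <;> fin_cases r2 <;>
    simp (config := { decide := true }) [proj, bell, e0, e1, xp, xm, yp, ym, vecMulVec_apply,
      kroneckerMap_apply, q_real, star_mul', Complex.conj_I, -cons_vecMulVec] <;>
    ring_nf <;> norm_num [q_sq, q_sq', q_pow4, q_pow4', Complex.I_sq]

lemma sep02 : IsSepState ((2 : ℂ)⁻¹ • (proj (bell 0) + proj (bell 2))) := by
  rw [id02]
  exact isSep_two xp_density xp_density xm_density xm_density


lemma id03 : proj (bell 0) + proj (bell 3) =
    (proj yp ⊗ₖ proj ym) + (proj ym ⊗ₖ proj yp) := by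
  ext ⟨p1, p2⟩ ⟨r1, r2⟩
  fin_cases p1 <;> fin_cases p2 <;> fin_cases r1 <;> fin_cases r2 <;>
    simp (config := { decide := true }) [proj, bell, e0, e1, xp, xm, yp, ym, vecMulVec_apply,
      kroneckerMap_apply, q_real, star_mul', Complex.conj_I, -cons_vecMulVec] <;>
    ring_nf <;> norm_num [q_sq, q_sq', q_pow4, q_pow4', Complex.I_sq]

lemma sep03 : IsSepState ((2 : ℂ)⁻¹ • (proj (bell 0) + proj (bell 3))) := by
  rw [id03]
  exact isSep_two yp_density ym_density ym_density yp_density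


lemma id12 : proj (bell 1) + proj (bell 2) =
    (proj yp ⊗ₖ proj yp) + (proj ym ⊗ₖ proj ym) := by
  ext ⟨p1, p2⟩ ⟨r1, r2⟩
  fin_cases p1 <;> fin_cases p2 <;> fin_cases r1 <;> fin_cases r2 <;>
    simp (config := { decide := true }) [proj, bell, e0, e1, xp, xm, yp, ym, vecMulVec_apply,
      kroneckerMap_apply, q_real, star_mul', Complex.conj_I, -cons_vecMulVec] <;>
    ring_nf <;> norm_num [q_sq, q_sq', q_pow4, q_pow4', Complex.I_sq]

lemma sep12 : IsSepState ((2 : ℂ)⁻¹ • (proj (bell 1) + proj (bell 2))) := by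
  rw [id12]
  exact isSep_two yp_density yp_density ym_density ym_density


lemma id13 : proj (bell 1) + proj (bell 3) =
    (proj xp ⊗ₖ proj xm) + (proj xm ⊗ₖ proj xp) := by
  ext ⟨p1, p2⟩ ⟨r1, r2⟩
  fin_cases p1 <;> fin_cases p2 <;> fin_cases r1 <;> fin_cases r2 <;>
    simp (config := { decide := true }) [proj, bell, e0, e1, xp, xm, yp, ym, vecMulVec_apply,
      kroneckerMap_apply, q_real, star_mul', Complex.conj_I, -cons_vecMulVec] <;>
    ring_nf <;> norm_num [q_sq, q_sq', q_pow4, q_pow4', Complex.I_sq]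

lemma sep13 : IsSepState ((2 : ℂ)⁻¹ • (proj (bell 1) + proj (bell 3))) := by
  rw [id13]
  exact isSep_two xp_density xm_density xm_density xp_density


theorem bell_mixtures_separable (i j : Fin 4) (hij : i ≠ j) :
    IsSepState ((2 : ℂ)⁻¹ • (proj (bell i) + proj (bell j))) := by
  fin_cases i <;> fin_cases j <;>
    first
      | exact absurd rfl hij
      | exact sep01 | exact sep23 | exact sep02 | exact sep03 | exact sep12 | exact sep13
      | (rw [add_comm]
         first
           | exact sep01 | exact sep23 | exact sep02 | exact sep03 | exact sep12 | exact sep13)
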